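/- Fix ξ = (ξ₁,ξ₂) ∈ 𝔻 and define h(·,ξ) : closure(𝔻) → ℝ³ by h((x,y),ξ) = ( ((ξ₁−ξ₂)(x²+y²)−x+y)·((ξ₁+ξ₂)(x²+y²)−x−y) / ((ξ₁²+ξ₂²)(x²+y²)−2ξ₁x−2ξ₂y+1)², 2(ξ₁(x²+y²)−x)(ξ₂(x²+y²)−y) / ((ξ₁²+ξ₂²)(x²+y²)−2ξ₁x−2ξ₂y+1)², 0 ). Then: (i) the denominator (ξ₁²+ξ₂²)(x²+y²)−2ξ₁x−2ξ₂y+1 is strictly positive for all (x,y) in the closed unit disk; (ii) each component of h(·,ξ) is harmonic in 𝔻; (iii) for every (x,y) ∈ ∂𝔻, h((x,y),ξ) = ( ((x−ξ₁)²−(y−ξ₂)²)/((x−ξ₁)²+(y−ξ₂)²)², 2(x−ξ₁)(y−ξ₂)/((x−ξ₁)²+(y−ξ₂)²)², 0 ). In other words, h(·,ξ) is the harmonic extension to 𝔻 of the boundary map h̃((x,y),ξ) = ( ((x−ξ₁)²−(y−ξ₂)²)/((x−ξ₁)²+(y−ξ₂)²)², 2(x−ξ₁)(y−ξ₂)/((x−ξ₁)²+(y−ξ₂)²)²,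 0 ). -/

import Mathlib

noncomputable section

open Metric

/-- Partial derivative in the `x` direction of a scalar function, identifying `ℝ²` with `ℂ`
via `z = x + iy`. -/
def px (f : ℂ → ℝ) (z : ℂ) : ℝ := fderiv ℝ f z 1

/-- Partial derivative in the `y` direction. -/
def py (f : ℂ → ℝ) (z : ℂ) : ℝ := fderiv ℝ f z Complex.I

/-- `f` is harmonic on `s`: it is `C²` there and its Laplacian vanishes on `s`. -/
def HarmonicOnSet (f : ℂ → ℝ) (s : Set ℂ) : Prop :=
  ContDiffOn ℝ 2 f s ∧ ∀ z ∈ s, px (px f) z + py (py f) z = 0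

/-- The denominator `(ξ₁²+ξ₂²)(x²+y²) − 2ξ₁x − 2ξ₂y + 1`. -/
def den (ξ z : ℂ) : ℝ :=
  (ξ.re ^ 2 + ξ.im ^ 2) * (z.re ^ 2 + z.im ^ 2) - 2 * ξ.re * z.re - 2 * ξ.im * z.im + 1

/-- First component of the harmonic extension `h(·, ξ)`. -/
def hExt1 (ξ z : ℂ) : ℝ :=
  ((ξ.re - ξ.im) * (z.re ^ 2 + z.im ^ 2) - z.re + z.im) *
    ((ξ.re + ξ.im) * (z.re ^ 2 + z.im ^ 2) - z.re - z.im) / (den ξ z) ^ 2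

/-- Second component of the harmonic extension `h(·, ξ)`. -/
def hExt2 (ξ z : ℂ) : ℝ :=
  2 * (ξ.re * (z.re ^ 2 + z.im ^ 2) - z.re) * (ξ.im * (z.re ^ 2 + z.im ^ 2) - z.im) /
    (den ξ z) ^ 2

/-! ### Auxiliary lemmas -/

lemma px_re' {f : ℂ → ℂ} {z : ℂ} (hf : DifferentiableAt ℂ f z) :
    px (fun w => (f w).re) z = (deriv f z).re := by
  have h : HasFDerivAt (fun w => (f w).re)
      (Complex.reCLM.comp ((fderiv ℂ f z).restrictScalars ℝ)) z :=
    Complex.reCLM.hasFDerivAt.comp z (hf.hasFDerivAt.restrictScalars ℝ)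
  simp [px, h.fderiv, ← toSpanSingleton_deriv]

lemma py_re' {f : ℂ → ℂ} {z : ℂ} (hf : DifferentiableAt ℂ f z) :
    py (fun w => (f w).re) z = -(deriv f z).im := by
  have h : HasFDerivAt (fun w => (f w).re)
      (Complex.reCLM.comp ((fderiv ℂ f z).restrictScalars ℝ)) z :=
    Complex.reCLM.hasFDerivAt.comp z (hf.hasFDerivAt.restrictScalars ℝ)
  have h2 : (fderiv ℂ f z) Complex.I = Complex.I * deriv f z := by
    rw [show (Complex.I : ℂ) = Complex.I • (1 : ℂ) by simp, map_smul]
    simp [smul_eq_mul, ← toSpanSingleton_deriv]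
  simp [py, h.fderiv, h2]

lemma px_congr' {f g : ℂ → ℝ} {s : Set ℂ} (hs : IsOpen s) (h : Set.EqOn f g s) {z : ℂ}
    (hz : z ∈ s) : px f z = px g z := by
  unfold px
  rw [Filter.EventuallyEq.fderiv_eq (h.eventuallyEq_of_mem (hs.mem_nhds hz))]

lemma py_congr' {f g : ℂ → ℝ} {s : Set ℂ} (hs : IsOpen s) (h : Set.EqOn f g s) {z : ℂ}
    (hz : z ∈ s) : py f z = py g z := by
  unfold py
  rw [Filter.EventuallyEq.fderiv_eq (h.eventuallyEq_of_mem (hs.mem_nhds hz))]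

/-- The real part of a holomorphic function is harmonic. -/
lemma harmonicOnSet_re {f : ℂ → ℂ} {s : Set ℂ} (hs : IsOpen s)
    (hf : DifferentiableOn ℂ f s) : HarmonicOnSet (fun z => (f z).re) s := by
  have hA : AnalyticOnNhd ℂ f s := hf.analyticOnNhd hs
  have hA' : AnalyticOnNhd ℂ (deriv f) s := hA.deriv
  have hd : ∀ z ∈ s, DifferentiableAt ℂ f z := fun z hz => (hA z hz).differentiableAt
  have hd' : ∀ z ∈ s, DifferentiableAt ℂ (deriv f) z := fun z hz => (hA' z hz).differentiableAt
  constructor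
  · exact Complex.reCLM.contDiff.comp_contDiffOn
      ((hA.contDiffOn hs.uniqueDiffOn).restrict_scalars ℝ)
  · intro z hz
    have e1 : Set.EqOn (px (fun w => (f w).re)) (fun w => (deriv f w).re) s :=
      fun w hw => px_re' (hd w hw)
    have e2 : Set.EqOn (py (fun w => (f w).re))
        (fun w => ((Complex.I * deriv f w)).re) s := by
      intro w hw
      have := py_re' (hd w hw)
      simp [this]
    have h1 : px (px (fun w => (f w).re)) z = (deriv (deriv f) z).re := by
      rw [px_congr' hs e1 hz]; exact px_re' (hd' z hz)
    have h2 : py (py (fun w => (f w).re)) z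
        = -(deriv (fun w => Complex.I * deriv f w) z).im := by
      rw [py_congr' hs e2 hz]
      exact py_re' ((hd' z hz).const_mul _)
    have h3 : deriv (fun w => Complex.I * deriv f w) z = Complex.I * deriv (deriv f) z := by
      rw [deriv_const_mul _ (hd' z hz)]
    rw [h1, h2, h3]
    simp

/-- The imaginary part of a holomorphic function is harmonic. -/
lemma harmonicOnSet_im {f : ℂ → ℂ} {s : Set ℂ} (hs : IsOpen s)
    (hf : DifferentiableOn ℂ f s) : HarmonicOnSet (fun z => (f z).im) s := by
  have : (fun z => (f z).im) = fun z => ((-Complex.I) * f z).re := by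
    funext z; simp
  rw [this]
  exact harmonicOnSet_re hs (hf.const_mul _)

lemma harmonicOnSet_congr {f g : ℂ → ℝ} {s : Set ℂ} (hs : IsOpen s)
    (hf : HarmonicOnSet f s) (h : Set.EqOn f g s) : HarmonicOnSet g s := by
  constructor
  · exact hf.1.congr fun x hx => (h hx).symm
  · intro z hz
    have e1 : Set.EqOn (px g) (px f) s := fun w hw => (px_congr' hs h hw).symm
    have e2 : Set.EqOn (py g) (py f) s := fun w hw => (py_congr' hs h hw).symm
    rw [px_congr' hs e1 hz, py_congr' hs e2 hz]
    exact hf.2 z hz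

lemma den_eq_normSq (ξ z : ℂ) : den ξ z = Complex.normSq (1 - (starRingEnd ℂ) ξ * z) := by
  simp [den, Complex.normSq_apply, Complex.sub_re, Complex.sub_im, Complex.mul_re,
    Complex.mul_im]
  ring

lemma den_pos' {ξ z : ℂ} (hξ : ‖ξ‖ < 1) (hz : ‖z‖ ≤ 1) : 0 < den ξ z := by
  rw [den_eq_normSq]
  apply Complex.normSq_pos.mpr
  intro h
  have h1 : (starRingEnd ℂ) ξ * z = 1 := (sub_eq_zero.mp h).symm
  have : ‖(starRingEnd ℂ) ξ * z‖ < 1 := by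
    rw [norm_mul]
    calc ‖(starRingEnd ℂ) ξ‖ * ‖z‖ ≤ ‖(starRingEnd ℂ) ξ‖ * 1 :=
          mul_le_mul_of_nonneg_left hz (norm_nonneg _)
      _ = ‖ξ‖ := by simp
      _ < 1 := hξ
  rw [h1] at this; simp at this

lemma key_div {ξ z : ℂ} (h : den ξ z ≠ 0) :
    z ^ 2 / (1 - (starRingEnd ℂ) ξ * z) ^ 2 =
      (z * (starRingEnd ℂ) (1 - (starRingEnd ℂ) ξ * z)) ^ 2 / ((den ξ z : ℝ) : ℂ) ^ 2 := by
  set d : ℂ := 1 - (starRingEnd ℂ) ξ * z with hd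
  have hdz : d ≠ 0 := by
    intro h0; rw [den_eq_normSq, ← hd, h0] at h; simp at h
  have hc : ((den ξ z : ℝ) : ℂ) = (starRingEnd ℂ) d * d := by
    rw [den_eq_normSq, ← hd]; exact Complex.normSq_eq_conj_mul_self
  have hcz : (starRingEnd ℂ) d ≠ 0 := by simpa using hdz
  rw [hc, show ((starRingEnd ℂ) d * d) ^ 2 = d ^ 2 * ((starRingEnd ℂ) d) ^ 2 by ring,
    show (z * (starRingEnd ℂ) d) ^ 2 = z ^ 2 * ((starRingEnd ℂ) d) ^ 2 by ring,
    mul_div_mul_right _ _ (pow_ne_zero 2 hcz)]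

lemma hExt1_eq {ξ z : ℂ} (h : den ξ z ≠ 0) :
    hExt1 ξ z = (z ^ 2 / (1 - (starRingEnd ℂ) ξ * z) ^ 2).re := by
  rw [key_div h, show ((den ξ z : ℝ) : ℂ) ^ 2 = ((den ξ z ^ 2 : ℝ) : ℂ) by push_cast; ring,
    Complex.div_ofReal_re]
  unfold hExt1
  congr 1
  simp [Complex.mul_re, Complex.mul_im, pow_two, Complex.sub_re, Complex.sub_im]
  ring

lemma hExt2_eq {ξ z : ℂ} (h : den ξ z ≠ 0) :
    hExt2 ξ z = (z ^ 2 / (1 - (starRingEnd ℂ) ξ * z) ^ 2).im := by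
  rw [key_div h, show ((den ξ z : ℝ) : ℂ) ^ 2 = ((den ξ z ^ 2 : ℝ) : ℂ) by push_cast; ring,
    Complex.div_ofReal_im]
  unfold hExt2
  congr 1
  simp [Complex.mul_re, Complex.mul_im, pow_two, Complex.sub_re, Complex.sub_im]
  ring

/-- `h(·, ξ)` has positive denominator on the closed unit disk, each of its components
(including the constant third component `0`) is harmonic in the open unit disk, and on the
unit circle it coincides with the boundary map `h̃(·, ξ)`;  i.e. `h(·, ξ)` is the harmonic
extension of `h̃(·, ξ)` to the disk. -/
theorem harmonic_extension_degree_two (ξ : ℂ) (hξ : ξ ∈ ball (0 : ℂ) 1) :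
    (∀ z ∈ closedBall (0 : ℂ) 1, 0 < den ξ z) ∧
    HarmonicOnSet (hExt1 ξ) (ball (0 : ℂ) 1) ∧
    HarmonicOnSet (hExt2 ξ) (ball (0 : ℂ) 1) ∧
    HarmonicOnSet (fun _ => (0 : ℝ)) (ball (0 : ℂ) 1) ∧
    (∀ z ∈ sphere (0 : ℂ) 1,
      hExt1 ξ z = ((z.re - ξ.re) ^ 2 - (z.im - ξ.im) ^ 2) /
          ((z.re - ξ.re) ^ 2 + (z.im - ξ.im) ^ 2) ^ 2 ∧
      hExt2 ξ z = 2 * (z.re - ξ.re) * (z.im - ξ.im) /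
          ((z.re - ξ.re) ^ 2 + (z.im - ξ.im) ^ 2) ^ 2) := by
  have hξ1 : ‖ξ‖ < 1 := mem_ball_zero_iff.mp hξ
  have hden : ∀ z ∈ closedBall (0 : ℂ) 1, 0 < den ξ z := fun z hz =>
    den_pos' hξ1 (mem_closedBall_zero_iff.mp hz)
  have hdenb : ∀ z ∈ ball (0 : ℂ) 1, den ξ z ≠ 0 := fun z hz =>
    (hden z (ball_subset_closedBall hz)).ne'
  set g : ℂ → ℂ := fun z => z ^ 2 / (1 - (starRingEnd ℂ) ξ * z) ^ 2 with hg
  have hgd : DifferentiableOn ℂ g (ball (0 : ℂ) 1) := by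
    apply DifferentiableOn.div
    · exact (differentiable_pow 2).differentiableOn
    · apply DifferentiableOn.pow
      exact (differentiable_const _ |>.sub ((differentiable_const _).mul differentiable_id)
        ).differentiableOn
    · intro z hz
      intro h0
      have := hdenb z hz
      rw [den_eq_normSq] at this
      exact this (by rw [pow_eq_zero_iff (by norm_num : 2 ≠ 0)] at h0; simp [h0])
  refine ⟨hden, ?_, ?_, ?_, ?_⟩
  · exact harmonicOnSet_congr isOpen_ball (harmonicOnSet_re isOpen_ball hgd)
      fun z hz => (hExt1_eq (hdenb z hz)).symm
  · exact harmonicOnSet_congr isOpen_ball (harmonicOnSet_im isOpen_ball hgd)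
      fun z hz => (hExt2_eq (hdenb z hz)).symm
  · constructor
    · exact contDiffOn_const
    · intro z hz
      have h0 : px (fun _ : ℂ => (0 : ℝ)) = fun _ => 0 := by
        funext w; simp [px]
      have h0' : py (fun _ : ℂ => (0 : ℝ)) = fun _ => 0 := by
        funext w; simp [py]
      rw [h0, h0']
      simp [px, py]
  · intro z hz
    have hz1 : ‖z‖ = 1 := mem_sphere_zero_iff_norm.mp hz
    have hz2 : z.re ^ 2 + z.im ^ 2 = 1 := by
      have h : Complex.normSq z = 1 := by
        rw [← Complex.sq_norm, hz1]; norm_num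
      rw [Complex.normSq_apply] at h
      nlinarith [h]
    have hd : den ξ z = (z.re - ξ.re) ^ 2 + (z.im - ξ.im) ^ 2 := by
      unfold den; linear_combination (ξ.re ^ 2 + ξ.im ^ 2 - 1) * hz2
    constructor
    · unfold hExt1
      rw [hd]
      congr 1
      linear_combination ((ξ.re - ξ.im) * ((ξ.re + ξ.im) * (z.re ^ 2 + z.im ^ 2) - z.re - z.im)
        + (ξ.re + ξ.im) * ((ξ.re - ξ.im) - z.re + z.im)) * hz2
    · unfold hExt2
      rw [hd]
      congr 1
      linear_combination (2 * ξ.re * (ξ.im * (z.re ^ 2 + z.im ^ 2) - z.im)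
        + 2 * ξ.im * (ξ.re - z.re)) * hz2
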